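/- arXiv:2504.21690 — 9 statements merged into one kernel-verified Lean document; each statement's English description precedes it below -/
import Mathlib

section
/- Let X be a set with maps σ_a, τ_b : X → X for each a, b ∈ X satisfying σ_{σ_a(b)}(σ_{τ_b(a)}(c)) = σ_a(σ_b(c)) for all a, b, c ∈ X, with each σ_a bijective. Define on the free vector space C^n with basis {e_x : x ∈ X} the matrices R = Σ_{a,b∈X} e_{b,σ_a(b)} ⊗ e_{a,τ_b(a)} where additionally τ_b(a) = σ_{σ_a(b)}^{-1}(a) for all a, b. Then R satisfies the Yang–Baxter equation R₁₂R₁₃R₂₃ = R₂₃R₁₃R₁₂ on C^n ⊗ C^n ⊗ C^n. -/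
open Matrix Kronecker

private lemma aux12 {X : Type*} [DecidableEq X] (a b c q1 q2 q3 : X) :
    (if q1 = a ∧ q2 = b then (1 : ℂ) else 0) * (if c = q3 then 1 else 0)
      = if (q1, q2, q3) = (a, b, c) then 1 else 0 := by
  simp only [Prod.mk.injEq, ite_and, ite_mul, one_mul, zero_mul]
  split_ifs <;> simp_all

private lemma aux13 {X : Type*} [DecidableEq X] (a b c q1 q2 q3 : X) :
    (if q1 = a ∧ q3 = b then (1 : ℂ) else 0) * (if c = q2 then 1 else 0)
      = if (q1, q2, q3) = (a, c, b) then 1 else 0 := by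
  simp only [Prod.mk.injEq, ite_and, ite_mul, one_mul, zero_mul]
  split_ifs <;> simp_all

private lemma aux23 {X : Type*} [DecidableEq X] (a b c q1 q2 q3 : X) :
    (if q2 = a ∧ q3 = b then (1 : ℂ) else 0) * (if c = q1 then 1 else 0)
      = if (q1, q2, q3) = (c, a, b) then 1 else 0 := by
  simp only [Prod.mk.injEq, ite_and, ite_mul, one_mul, zero_mul]
  split_ifs <;> simp_all


private lemma auxRe {X : Type*} [Fintype X] [DecidableEq X]
    (σ τ : X → X → X)
    (R : Matrix (X × X) (X × X) ℂ)
    (hR : R = ∑ a : X, ∑ b : X,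
      Matrix.single b (σ a b) (1 : ℂ) ⊗ₖ Matrix.single a (τ b a) (1 : ℂ)) :
    ∀ i j k l, R (i, j) (k, l) = if k = σ j i ∧ l = τ i j then 1 else 0 := by
  intro i j k l
  subst hR
  rw [Matrix.sum_apply]
  rw [Finset.sum_eq_single j ?_ (by simp)]
  · rw [Matrix.sum_apply, Finset.sum_eq_single i ?_ (by simp)]
    · simp only [Matrix.kroneckerMap_apply, Matrix.single, Matrix.of_apply, ite_and,
        ite_mul, one_mul, zero_mul]
      split_ifs <;> simp_all
    · intro b _ hb
      simp [Matrix.single, hb, Ne.symm hb]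
  · intro a _ ha
    rw [Matrix.sum_apply]
    apply Finset.sum_eq_zero
    intro b _
    simp [Matrix.single, ha, Ne.symm ha]

/-- the combinatorial matrix `R = Σ_{a,b} e_{b,σ_a(b)} ⊗ e_{a,τ_b(a)}`
satisfies the Yang–Baxter equation on `ℂ^n ⊗ ℂ^n ⊗ ℂ^n`. -/
theorem stmt0 {X : Type*} [Fintype X] [DecidableEq X]
    (σ τ : X → X → X)
    (hbij : ∀ a, Function.Bijective (σ a))
    (hτ : ∀ a b, σ (σ a b) (τ b a) = a)
    (hcompat : ∀ a b c, σ (σ a b) (σ (τ b a) c) = σ a (σ b c))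
    (R : Matrix (X × X) (X × X) ℂ)
    (hR : R = ∑ a : X, ∑ b : X,
      Matrix.single b (σ a b) (1 : ℂ) ⊗ₖ Matrix.single a (τ b a) (1 : ℂ))
    (R12 R13 R23 : Matrix (X × X × X) (X × X × X) ℂ)
    (hR12 : ∀ p q, R12 p q = R (p.1, p.2.1) (q.1, q.2.1) * (if p.2.2 = q.2.2 then 1 else 0))
    (hR13 : ∀ p q, R13 p q = R (p.1, p.2.2) (q.1, q.2.2) * (if p.2.1 = q.2.1 then 1 else 0))
    (hR23 : ∀ p q, R23 p q = R (p.2.1, p.2.2) (q.2.1, q.2.2) * (if p.1 = q.1 then 1 else 0)) :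
    R12 * R13 * R23 = R23 * R13 * R12 := by
  classical
  have hinj : ∀ a, Function.Injective (σ a) := fun a => (hbij a).1
  -- characterization of τ
  have tau_char : ∀ a b t, σ (σ a b) t = a → t = τ b a := by
    intro a b t h
    exact hinj _ (h.trans (hτ a b).symm)
  -- key combinatorial identities
  have lemB : ∀ x y z, σ (τ (σ y x) z) (τ x y) = τ (σ (τ y z) x) (σ z y) := by
    intro x y z
    apply tau_char
    rw [hcompat z y x, hcompat z (σ y x) (τ x y), hτ y x]
  have lemC : ∀ x y z, τ (τ x y) (τ (σ y x) z) = τ x (τ y z) := by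
    intro x y z
    symm
    apply tau_char
    rw [lemB x y z]
    apply hinj (σ z (σ y x))
    rw [hτ z (σ y x), ← hcompat z y x,
      hcompat (σ z y) (σ (τ y z) x) (τ x (τ y z)), hτ (τ y z) x, hτ z y]
  -- entries of R
  have hRe := auxRe σ τ R hR
  -- the structure maps on triples
  set f12 : X × X × X → X × X × X := fun p => (σ p.2.1 p.1, τ p.1 p.2.1, p.2.2) with hf12
  set f13 : X × X × X → X × X × X := fun p => (σ p.2.2 p.1, p.2.1, τ p.1 p.2.2) with hf13
  set f23 : X × X × X → X × X × X := fun p => (p.1, σ p.2.2 p.2.1, τ p.2.1 p.2.2) with hf23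
  have e12 : ∀ p q, R12 p q = if q = f12 p then 1 else 0 := by
    intro ⟨p1, p2, p3⟩ ⟨q1, q2, q3⟩
    rw [hR12, hRe]
    exact aux12 _ _ _ _ _ _
  have e13 : ∀ p q, R13 p q = if q = f13 p then 1 else 0 := by
    intro ⟨p1, p2, p3⟩ ⟨q1, q2, q3⟩
    rw [hR13, hRe]
    exact aux13 _ _ _ _ _ _
  have e23 : ∀ p q, R23 p q = if q = f23 p then 1 else 0 := by
    intro ⟨p1, p2, p3⟩ ⟨q1, q2, q3⟩
    rw [hR23, hRe]
    exact aux23 _ _ _ _ _ _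
  -- multiplying by a permutation-like matrix
  have perm_mul : ∀ (M N : Matrix (X × X × X) (X × X × X) ℂ) (f : X × X × X → X × X × X),
      (∀ p q, M p q = if q = f p then 1 else 0) → ∀ p s, (M * N) p s = N (f p) s := by
    intro M N f h p s
    rw [Matrix.mul_apply]
    simp [h, ite_mul, Finset.sum_ite_eq']
  ext p s
  rw [Matrix.mul_assoc, Matrix.mul_assoc,
    perm_mul R12 _ f12 e12, perm_mul R13 _ f13 e13,
    perm_mul R23 _ f23 e23, perm_mul R13 _ f13 e13,
    e23, e12]
  obtain ⟨x, y, z⟩ := p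
  have key : f23 (f13 (f12 (x, y, z))) = f12 (f13 (f23 (x, y, z))) := by
    simp only [hf12, hf13, hf23]
    refine Prod.ext ?_ (Prod.ext ?_ ?_)
    · exact (hcompat z y x).symm
    · exact lemB x y z
    · exact lemC x y z
  rw [key]
end

section
/- Let (X, +, 0) be a group, σ_a : X → X bijective additive maps (σ_a(b+c) = σ_a(b) + σ_a(c)), and define a ∘ b := a + σ_a(b). If (X, ∘) is a semigroup (i.e. ∘ is associative), then σ_a(σ_b(c)) = σ_{a∘b}(c) for all a, b, c ∈ X. -/
/-- The binary operation `a ∘ b := a + σ_a(b)`. -/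
def circ {X : Type*} [AddGroup X] (σ : X → X → X) (a b : X) : X := a + σ a b

/-- if `∘` is associative then `σ_a(σ_b(c)) = σ_{a∘b}(c)`. -/
theorem stmt2 {X : Type*} [AddGroup X] (σ : X → X → X)
    (hbij : ∀ a, Function.Bijective (σ a))
    (hadd : ∀ x a b : X, σ x (a + b) = σ x a + σ x b)
    (hassoc : ∀ a b c : X, circ σ (circ σ a b) c = circ σ a (circ σ b c)) :
    ∀ a b c : X, σ a (σ b c) = σ (circ σ a b) c := by
  intro a b c
  have h := hassoc a b c
  simp only [circ, hadd, add_assoc] at h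
  exact (add_left_cancel (add_left_cancel h)).symm
end

section
/- Let (X, +, 0) be a group, σ_a : X → X bijective additive maps, and a ∘ b := a + σ_a(b). If ∘ is associative, then (X, ∘, 0) is a group, with 0 serving as the two-sided identity and a^{-1} := σ_a^{-1}(-a) as the two-sided inverse of a. -/
/-- if `∘` is associative then `(X, ∘, 0)` is a group, with `0` a two-sided
identity and `a⁻¹ := σ_a⁻¹(-a)` a two-sided inverse. -/
theorem stmt3 {X : Type*} [AddGroup X] (σ σinv : X → X → X)
    (hbij : ∀ a, Function.Bijective (σ a))
    (hinv : ∀ a, Function.LeftInverse (σinv a) (σ a) ∧ Function.RightInverse (σinv a) (σ a))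
    (hadd : ∀ x a b : X, σ x (a + b) = σ x a + σ x b)
    (hassoc : ∀ a b c : X, circ σ (circ σ a b) c = circ σ a (circ σ b c)) :
    (∀ a : X, circ σ a 0 = a) ∧ (∀ a : X, circ σ 0 a = a) ∧
    (∀ a : X, circ σ a (σinv a (-a)) = 0) ∧ (∀ a : X, circ σ (σinv a (-a)) a = 0) := by
  have h0 : ∀ a : X, σ a 0 = 0 := by
    intro a
    have h := hadd a 0 0
    rw [add_zero] at h
    exact add_eq_left.mp h.symm
  have h1 : ∀ a : X, circ σ a 0 = a := by
    intro a; simp [circ, h0]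
  have hσ0 : ∀ c : X, σ 0 c = c := by
    intro c
    have h := hassoc 0 0 c
    rw [h1 0] at h
    have h' : σ 0 c = σ 0 (circ σ 0 c) := by
      have := h
      simp only [circ, zero_add] at this ⊢
      exact this
    have := (hbij 0).1 h'
    simp [circ, ← this] at this ⊢
    exact this.symm
  have h2 : ∀ a : X, circ σ 0 a = a := by
    intro a; simp [circ, hσ0]
  have h3 : ∀ a : X, circ σ a (σinv a (-a)) = 0 := by
    intro a
    simp [circ, (hinv a).2 (-a)]
  have h4 : ∀ a : X, circ σ (σinv a (-a)) a = 0 := by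
    intro a
    set b := σinv a (-a) with hb
    have e1 : circ σ (circ σ b a) b = b := by rw [hassoc, h3, h1]
    calc circ σ b a = circ σ (circ σ b a) (circ σ b (σinv b (-b))) := by
          rw [h3, h1]
      _ = circ σ (circ σ (circ σ b a) b) (σinv b (-b)) := (hassoc _ _ _).symm
      _ = circ σ b (σinv b (-b)) := by rw [e1]
      _ = 0 := h3 b
  exact ⟨h1, h2, h3, h4⟩
end

section
/- Let (X,+,∘) be a left brace (i.e. (X,+) abelian), σ_a(b) := -a + a∘b, τ_b(a) := σ_{σ_a(b)}^{-1}(a). Fix a, b ∈ X, and let a₁, a₂ ∈ X with a₁ ∘ a₂ = a. Set c := σ_{σ_a(b)}^{-1}(a₁). Then τ_c(σ_a(b)) = σ_{a₂}(b). -/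
/-- A left brace: an abelian group `(X,+,0)` and a group `(X,*,1)`
satisfying `a * (b + c) = a * b - a + a * c`. -/
class LeftBrace (X : Type*) extends AddCommGroup X, Group X where
  brace : ∀ a b c : X, a * (b + c) = a * b + -a + a * c

/-- `σ_a(b) := -a + a ∘ b`. -/
def sig {X : Type*} [LeftBrace X] (a b : X) : X := -a + a * b

/-- The inverse map `σ_a⁻¹(b) = a⁻¹ ∘ (a + b)`. -/
def sigInv {X : Type*} [LeftBrace X] (a b : X) : X := a⁻¹ * (a + b)

/-- `τ_b(a) := σ_{σ_a(b)}⁻¹(a)`. -/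
def tau {X : Type*} [LeftBrace X] (b a : X) : X := sigInv (sig a b) a

lemma mul_zero' {X : Type*} [LeftBrace X] (a : X) : a * 0 = a := by
  have h := LeftBrace.brace a 0 0
  rw [add_zero] at h
  calc a * 0 = -(a * 0 + -a) + (a * 0 + -a + a * 0) := by abel
    _ = -(a * 0 + -a) + a * 0 := by rw [← h]
    _ = a := by abel

lemma mul_neg' {X : Type*} [LeftBrace X] (a b : X) : a * (-b) = a + a - a * b := by
  have h := LeftBrace.brace a b (-b)
  rw [add_neg_cancel, mul_zero'] at h
  -- h : a = a * b + -a + a * -b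
  calc a * (-b) = -(a * b + -a) + (a * b + -a + a * (-b)) := by abel
    _ = -(a * b + -a) + a := by rw [← h]
    _ = a + a - a * b := by abel

lemma sig_mul {X : Type*} [LeftBrace X] (a b c : X) :
    sig (a * b) c = sig a (sig b c) := by
  unfold sig
  rw [LeftBrace.brace, mul_neg', mul_assoc]
  abel

lemma sig_sigInv {X : Type*} [LeftBrace X] (a x : X) : sig a (sigInv a x) = x := by
  unfold sig sigInv
  rw [mul_inv_cancel_left, neg_add_cancel_left]

lemma sigInv_sig {X : Type*} [LeftBrace X] (a x : X) : sigInv a (sig a x) = x := by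
  unfold sig sigInv
  rw [add_neg_cancel_left, inv_mul_cancel_left]

/-- in a left brace, if `a₁ ∘ a₂ = a` and `c := σ_{σ_a(b)}⁻¹(a₁)`,
then `τ_c(σ_a(b)) = σ_{a₂}(b)`. -/
theorem stmt12 {X : Type*} [LeftBrace X] (a b a₁ a₂ : X) (ha : a₁ * a₂ = a)
    (c : X) (hc : c = sigInv (sig a b) a₁) :
    tau c (sig a b) = sig a₂ b := by
  unfold tau
  rw [hc, sig_sigInv, ← ha, sig_mul, sigInv_sig]
end

section
/- Let X be a finite set with bijections σ_a : X → X satisfying σ_a(σ_b(c)) = σ_{σ_a(b)}(σ_{τ_b(a)}(c)) for all a,b,c, where τ_b(a) := σ_{σ_a(b)}^{-1}(a). On C^n ⊗ C^n (n = |X|) define F := Σ_{a,b∈X} e_{a,a} ⊗ e_{b,σ_a(b)} and R := F^{op} F^{-1} where F^{op} = P F P (P the flip). Then R = Σ_{a,b∈X} e_{b,σ_a(b)} ⊗ e_{a,τ_b(a)} and R₁₂ R₂₁ = Id, where R₂₁ = P R P. -/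
open Matrix Kronecker

/-- with `F = Σ_{a,b} e_{a,a} ⊗ e_{b,σ_a(b)}`, `P` the flip and
`R := F^{op} F⁻¹ = (P F P) F⁻¹`, one has `R = Σ_{a,b} e_{b,σ_a(b)} ⊗ e_{a,τ_b(a)}` and
`R₁₂ R₂₁ = Id` where `R₂₁ = P R P`. -/
theorem stmt14 {X : Type*} [Fintype X] [DecidableEq X]
    (σ τ : X → X → X)
    (hbij : ∀ a, Function.Bijective (σ a))
    (hτ : ∀ a b, σ (σ a b) (τ b a) = a)
    (hcompat : ∀ a b c, σ a (σ b c) = σ (σ a b) (σ (τ b a) c))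
    (F P R : Matrix (X × X) (X × X) ℂ)
    (hF : F = ∑ a : X, ∑ b : X,
      Matrix.single a a (1 : ℂ) ⊗ₖ Matrix.single b (σ a b) (1 : ℂ))
    (hP : P = ∑ a : X, ∑ b : X,
      Matrix.single a b (1 : ℂ) ⊗ₖ Matrix.single b a (1 : ℂ))
    (hR : R = (P * F * P) * F⁻¹) :
    R = (∑ a : X, ∑ b : X,
      Matrix.single b (σ a b) (1 : ℂ) ⊗ₖ Matrix.single a (τ b a) (1 : ℂ)) ∧
    R * (P * R * P) = 1 := by
  have hFe : ∀ p q r s : X, F (p,q) (r,s) = if r = p ∧ s = σ p q then 1 else 0 := by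
    intro p q r s
    rw [hF]
    simp [Matrix.sum_apply, Matrix.single, ite_and]
    rw [Finset.sum_eq_single p] <;> aesop
  have hPe : ∀ p q r s : X, P (p,q) (r,s) = if r = q ∧ s = p then 1 else 0 := by
    intro p q r s
    rw [hP]
    simp [Matrix.sum_apply, Matrix.single, ite_and]
    split_ifs <;> simp_all
  set G : Matrix (X × X) (X × X) ℂ :=
    Matrix.of (fun x y => if x.1 = y.1 ∧ x.2 = σ x.1 y.2 then 1 else 0) with hG
  have hGe : ∀ p q r s : X, G (p,q) (r,s) = if p = r ∧ q = σ p s then 1 else 0 := by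
    intro p q r s; rfl
  have hFG : F * G = 1 := by
    ext ⟨p,q⟩ ⟨r,s⟩
    rw [Matrix.mul_apply, Finset.sum_eq_single ((p, σ p q) : X × X)]
    · rw [hFe, hGe, Matrix.one_apply]
      by_cases h : p = r <;>
        simp [h, (hbij r).injective.eq_iff, Prod.ext_iff, eq_comm]
    · rintro ⟨u,v⟩ _ huv
      rw [hFe]
      aesop
    · simp
  have hGF : G * F = 1 := by
    ext ⟨p,q⟩ ⟨r,s⟩
    set w := (Equiv.ofBijective (σ p) (hbij p)).symm q with hw
    have hσw : σ p w = q := (Equiv.ofBijective (σ p) (hbij p)).apply_symm_apply q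
    rw [Matrix.mul_apply, Finset.sum_eq_single ((p, w) : X × X)]
    · rw [hFe, hGe, Matrix.one_apply, hσw]
      by_cases h : p = r <;> simp [h, Prod.ext_iff, eq_comm]
    · rintro ⟨u,v⟩ _ huv
      rw [hGe]
      by_cases h1 : p = u
      · subst h1
        by_cases h2 : q = σ p v
        · have : v = w := (hbij p).injective (by rw [hσw, ← h2])
          exact absurd (by rw [this]) huv
        · simp [h2]
      · simp [h1]
    · simp
  have hPP : P * P = 1 := by
    ext ⟨p,q⟩ ⟨r,s⟩
    rw [Matrix.mul_apply, Finset.sum_eq_single ((q, p) : X × X)]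
    · rw [hPe, hPe, Matrix.one_apply]
      simp [Prod.ext_iff, eq_comm]
    · rintro ⟨u,v⟩ _ huv
      rw [hPe]
      aesop
    · simp
  have hFinv : F⁻¹ = G := Matrix.inv_eq_right_inv hFG
  have hR' : R = P * F * P * G := by rw [hR, hFinv]
  have hPFPe : ∀ p q r s : X, (P * F * P) (p,q) (r,s) =
      if s = q ∧ r = σ q p then 1 else 0 := by
    intro p q r s
    rw [Matrix.mul_apply, Finset.sum_eq_single ((s, r) : X × X)]
    · rw [hPe, Matrix.mul_apply, Finset.sum_eq_single ((q, p) : X × X)]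
      · rw [hPe, hFe]
        simp
      · rintro ⟨u,v⟩ _ huv
        rw [hPe]
        aesop
      · simp
    · rintro ⟨u,v⟩ _ huv
      have : ¬(r = v ∧ s = u) := by rintro ⟨rfl, rfl⟩; exact huv rfl
      rw [hPe, if_neg this, mul_zero]
    · simp
  have key : ∀ p q s : X, q = σ (σ q p) s ↔ s = τ p q := by
    intro p q s
    constructor
    · intro h
      exact (hbij (σ q p)).injective (by rw [← h, hτ])
    · intro h; rw [h, hτ]
  have hRe : ∀ p q r s : X, R (p,q) (r,s) =
      if r = σ q p ∧ s = τ p q then 1 else 0 := by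
    intro p q r s
    rw [hR', Matrix.mul_apply, Finset.sum_eq_single ((σ q p, q) : X × X)]
    · rw [hPFPe, hGe, if_pos ⟨rfl, rfl⟩, one_mul]
      by_cases h1 : r = σ q p
      · subst h1; simp [key]
      · simp [h1, Ne.symm h1]
    · rintro ⟨u,v⟩ _ huv
      have : ¬(v = q ∧ u = σ q p) := by rintro ⟨rfl, rfl⟩; exact huv rfl
      rw [hPFPe, if_neg this, zero_mul]
    · simp
  constructor
  · ext ⟨p,q⟩ ⟨r,s⟩
    rw [hRe]
    simp [Matrix.sum_apply, Matrix.single, ite_and]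
    rw [Finset.sum_eq_single p]
    · by_cases h1 : r = σ q p <;> by_cases h2 : s = τ p q <;> simp [h1, h2, eq_comm]
    · intro b _ hb; simp [hb]
    · simp
  · have cancel : ∀ M : Matrix (X×X) (X×X) ℂ, P * (P * M) = M := by
      intro M; rw [← Matrix.mul_assoc, hPP, Matrix.one_mul]
    have cancelGF : ∀ M : Matrix (X×X) (X×X) ℂ, G * (F * M) = M := by
      intro M; rw [← Matrix.mul_assoc, hGF, Matrix.one_mul]
    have cancelFG : ∀ M : Matrix (X×X) (X×X) ℂ, F * (G * M) = M := by
      intro M; rw [← Matrix.mul_assoc, hFG, Matrix.one_mul]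
    rw [hR']
    simp only [Matrix.mul_assoc]
    rw [cancel, cancelGF, cancel, cancelFG, hPP]
end

section
/- Let X be a finite set with bijections σ_a of X satisfying σ_{σ_a(b)}(σ_{τ_b(a)}(c)) = σ_a(σ_b(c)) where τ_b(a) = σ_{σ_a(b)}^{-1}(a). Define w_a := Σ_{b∈X} e_{σ_a(b),b} and h_a := e_{a,a} as n×n matrices (n=|X|). Then these matrices satisfy: h_a h_b = δ_{a,b} h_a, w_a is invertible, w_a w_b = w_{σ_a(b)} w_{τ_b(a)}, and w_a h_b = h_{σ_a(b)} w_a for all a, b ∈ X. -/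
open Matrix

/-- the matrices `w_a = Σ_b e_{σ_a(b),b}` and `h_a = e_{a,a}` give the
fundamental representation of the special set-theoretic Yang–Baxter algebra. -/
theorem stmt15 {X : Type*} [Fintype X] [DecidableEq X]
    (σ τ : X → X → X)
    (hbij : ∀ a, Function.Bijective (σ a))
    (hτ : ∀ a b, σ (σ a b) (τ b a) = a)
    (hcompat : ∀ a b c, σ (σ a b) (σ (τ b a) c) = σ a (σ b c))
    (w h : X → Matrix X X ℂ)
    (hw : ∀ a, w a = ∑ b : X, Matrix.single (σ a b) b (1 : ℂ))
    (hh : ∀ a, h a = Matrix.single a a (1 : ℂ)) :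
    (∀ a b : X, h a * h b = if a = b then h a else 0) ∧
    (∀ a : X, IsUnit (w a)) ∧
    (∀ a b : X, w a * w b = w (σ a b) * w (τ b a)) ∧
    (∀ a b : X, w a * h b = h (σ a b) * w a) := by
  have hwapp : ∀ a i j, w a i j = if i = σ a j then (1:ℂ) else 0 := by
    intro a i j
    rw [hw]
    rw [Matrix.sum_apply]
    rw [Finset.sum_eq_single j]
    · simp [Matrix.single, eq_comm]
    · intro b _ hb
      simp [Matrix.single, hb]
    · simp
  have hhapp : ∀ a i j, h a i j = if i = a ∧ j = a then (1:ℂ) else 0 := by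
    intro a i j
    rw [hh]
    simp [Matrix.single, eq_comm]
  refine ⟨?_, ?_, ?_, ?_⟩
  · intro a b
    ext i j
    rw [Matrix.mul_apply]
    by_cases hab : a = b
    · subst hab
      simp only [hhapp, if_pos rfl]
      rw [Finset.sum_eq_single a] <;> aesop
    · simp only [hhapp, if_neg hab]
      rw [Finset.sum_eq_zero] <;> aesop
  · intro a
    have h2 : (w a)ᵀ * w a = 1 := by
      ext i j
      rw [Matrix.mul_apply]
      simp only [transpose_apply, hwapp]
      rw [Finset.sum_eq_single (σ a i)]
      · by_cases hij : i = j
        · simp [hij, Matrix.one_apply]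
        · have : ¬ σ a i = σ a j := fun hc => hij ((hbij a).1 hc)
          simp [this, Matrix.one_apply, hij]
      · intro k _ hk
        simp [hk]
      · simp
    exact ⟨⟨w a, (w a)ᵀ, mul_eq_one_comm.mp h2, h2⟩, rfl⟩
  · intro a b
    ext i j
    rw [Matrix.mul_apply, Matrix.mul_apply]
    simp only [hwapp]
    rw [Finset.sum_eq_single (σ b j), Finset.sum_eq_single (σ (τ b a) j)]
    · simp [hcompat]
    · intro c _ hc
      simp [hc]
    · simp
    · intro c _ hc
      simp [hc]
    · simp
  · intro a b
    ext i j
    rw [Matrix.mul_apply, Matrix.mul_apply]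
    simp only [hwapp, hhapp]
    rw [Finset.sum_eq_single b, Finset.sum_eq_single (σ a j)]
    · by_cases h1 : j = b
      · subst h1; simp
      · have : ¬ σ a j = σ a b := fun hc => h1 ((hbij a).1 hc)
        simp [h1, this]
    · intro c _ hc
      simp [hc]
    · simp
    · intro c _ hc
      simp [hc]
    · simp
end

section
/- Let A be a unital associative algebra, F, R ∈ A ⊗ A invertible with R satisfying the Yang–Baxter equation R₁₂R₁₃R₂₃ = R₂₃R₁₃R₁₂, and suppose there exist invertible F_{1,23}, F_{12,3} ∈ A⊗A⊗A satisfying the cocycle condition F₂₃ F_{1,23} = F₁₂ F_{12,3}, together with F_{1,32} R₂₃ = R₂₃ F_{1,23} and F_{21,3} R₁₂ = R₁₂ F_{12,3} (where F_{1,32} = π₂₃(F_{1,23}), F_{21,3} = π₁₂(F_{12,3}), π the relevant flip). Then R^F := F^{op} R F^{-1} also satisfies the Yang–Baxter equation. -/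
open Matrix

/-- The algebra of operators on a triple tensor product. -/
abbrev M3 (V : Type*) := Matrix (V × V × V) (V × V × V) ℂ

/-- Embedding of an operator on `V ⊗ V` into factors 1,2 of `V ⊗ V ⊗ V`. -/
def emb12 {V : Type*} [DecidableEq V] (A : Matrix (V × V) (V × V) ℂ) : M3 V :=
  fun p q => A (p.1, p.2.1) (q.1, q.2.1) * (if p.2.2 = q.2.2 then 1 else 0)

/-- Embedding into factors 1,3. -/
def emb13 {V : Type*} [DecidableEq V] (A : Matrix (V × V) (V × V) ℂ) : M3 V :=
  fun p q => A (p.1, p.2.2) (q.1, q.2.2) * (if p.2.1 = q.2.1 then 1 else 0)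

/-- Embedding into factors 2,3. -/
def emb23 {V : Type*} [DecidableEq V] (A : Matrix (V × V) (V × V) ℂ) : M3 V :=
  fun p q => A (p.2.1, p.2.2) (q.2.1, q.2.2) * (if p.1 = q.1 then 1 else 0)

/-- The flip `π` on operators on `V ⊗ V`, giving `A^{op}`. -/
def flip2 {V : Type*} (A : Matrix (V × V) (V × V) ℂ) : Matrix (V × V) (V × V) ℂ :=
  fun p q => A (p.2, p.1) (q.2, q.1)

/-- The flip `π₁₂` of the first two factors on operators on `V ⊗ V ⊗ V`. -/
def swap12 {V : Type*} (A : M3 V) : M3 V :=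
  fun p q => A (p.2.1, p.1, p.2.2) (q.2.1, q.1, q.2.2)

/-- The flip `π₂₃` of the last two factors on operators on `V ⊗ V ⊗ V`. -/
def swap23 {V : Type*} (A : M3 V) : M3 V :=
  fun p q => A (p.1, p.2.2, p.2.1) (q.1, q.2.2, q.2.1)

section Aux

open Kronecker

set_option linter.unusedVariables false
set_option linter.unusedSectionVars false

variable {V : Type*} [Fintype V] [DecidableEq V]

/-- Reassociation equivalence putting factors 1,2 together. -/
def auxE12 : V × V × V ≃ (V × V) × V where
  toFun p := ((p.1, p.2.1), p.2.2)
  invFun p := (p.1.1, p.1.2, p.2)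
  left_inv p := rfl
  right_inv p := rfl

/-- Reassociation equivalence putting factors 1,3 together. -/
def auxE13 : V × V × V ≃ (V × V) × V where
  toFun p := ((p.1, p.2.2), p.2.1)
  invFun p := (p.1.1, p.2, p.1.2)
  left_inv p := rfl
  right_inv p := rfl

/-- Reassociation equivalence putting factors 2,3 together. -/
def auxE23 : V × V × V ≃ (V × V) × V where
  toFun p := ((p.2.1, p.2.2), p.1)
  invFun p := (p.2, p.1.1, p.1.2)
  left_inv p := rfl
  right_inv p := rfl

lemma emb12_eq (A : Matrix (V × V) (V × V) ℂ) :
    emb12 A = (A ⊗ₖ (1 : Matrix V V ℂ)).submatrix auxE12 auxE12 := by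
  ext p q
  simp [emb12, auxE12, Matrix.one_apply]

lemma emb13_eq (A : Matrix (V × V) (V × V) ℂ) :
    emb13 A = (A ⊗ₖ (1 : Matrix V V ℂ)).submatrix auxE13 auxE13 := by
  ext p q
  simp [emb13, auxE13, Matrix.one_apply]

lemma emb23_eq (A : Matrix (V × V) (V × V) ℂ) :
    emb23 A = (A ⊗ₖ (1 : Matrix V V ℂ)).submatrix auxE23 auxE23 := by
  ext p q
  simp [emb23, auxE23, Matrix.one_apply]

lemma emb12_mul (A B : Matrix (V × V) (V × V) ℂ) :
    emb12 (A * B) = emb12 A * emb12 B := by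
  rw [emb12_eq, emb12_eq, emb12_eq, Matrix.submatrix_mul_equiv,
    ← Matrix.mul_kronecker_mul, Matrix.one_mul]

lemma emb13_mul (A B : Matrix (V × V) (V × V) ℂ) :
    emb13 (A * B) = emb13 A * emb13 B := by
  rw [emb13_eq, emb13_eq, emb13_eq, Matrix.submatrix_mul_equiv,
    ← Matrix.mul_kronecker_mul, Matrix.one_mul]

lemma emb23_mul (A B : Matrix (V × V) (V × V) ℂ) :
    emb23 (A * B) = emb23 A * emb23 B := by
  rw [emb23_eq, emb23_eq, emb23_eq, Matrix.submatrix_mul_equiv,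
    ← Matrix.mul_kronecker_mul, Matrix.one_mul]

lemma emb12_one : emb12 (1 : Matrix (V × V) (V × V) ℂ) = 1 := by
  rw [emb12_eq, Matrix.one_kronecker_one, Matrix.submatrix_one_equiv]

lemma emb13_one : emb13 (1 : Matrix (V × V) (V × V) ℂ) = 1 := by
  rw [emb13_eq, Matrix.one_kronecker_one, Matrix.submatrix_one_equiv]

lemma emb23_one : emb23 (1 : Matrix (V × V) (V × V) ℂ) = 1 := by
  rw [emb23_eq, Matrix.one_kronecker_one, Matrix.submatrix_one_equiv]

/-- The permutation of indices realizing `swap12`. -/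
def auxS12 : V × V × V ≃ V × V × V where
  toFun p := (p.2.1, p.1, p.2.2)
  invFun p := (p.2.1, p.1, p.2.2)
  left_inv p := rfl
  right_inv p := rfl

/-- The permutation of indices realizing `swap23`. -/
def auxS23 : V × V × V ≃ V × V × V where
  toFun p := (p.1, p.2.2, p.2.1)
  invFun p := (p.1, p.2.2, p.2.1)
  left_inv p := rfl
  right_inv p := rfl

lemma swap12_eq (A : M3 V) : swap12 A = A.submatrix auxS12 auxS12 := rfl
lemma swap23_eq (A : M3 V) : swap23 A = A.submatrix auxS23 auxS23 := rfl

lemma swap12_mul (A B : M3 V) : swap12 (A * B) = swap12 A * swap12 B := by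
  rw [swap12_eq, swap12_eq, swap12_eq, Matrix.submatrix_mul_equiv]

lemma swap23_mul (A B : M3 V) : swap23 (A * B) = swap23 A * swap23 B := by
  rw [swap23_eq, swap23_eq, swap23_eq, Matrix.submatrix_mul_equiv]

lemma swap12_one : swap12 (1 : M3 V) = 1 := by
  rw [swap12_eq, Matrix.submatrix_one_equiv]

lemma swap23_one : swap23 (1 : M3 V) = 1 := by
  rw [swap23_eq, Matrix.submatrix_one_equiv]

lemma swap23_emb12 (A : Matrix (V × V) (V × V) ℂ) : swap23 (emb12 A) = emb13 A := rfl
lemma swap23_emb13 (A : Matrix (V × V) (V × V) ℂ) : swap23 (emb13 A) = emb12 A := rfl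
lemma swap23_emb23 (A : Matrix (V × V) (V × V) ℂ) : swap23 (emb23 A) = emb23 (flip2 A) := rfl
lemma swap12_emb12 (A : Matrix (V × V) (V × V) ℂ) : swap12 (emb12 A) = emb12 (flip2 A) := rfl
lemma swap12_emb13 (A : Matrix (V × V) (V × V) ℂ) : swap12 (emb13 A) = emb23 A := rfl
lemma swap12_emb23 (A : Matrix (V × V) (V × V) ℂ) : swap12 (emb23 A) = emb13 A := rfl

lemma rev_eq (A : M3 V) : swap12 (swap23 (swap12 A)) = swap23 (swap12 (swap23 A)) := rfl

/-- If `a x = x b` and `a', b'` are two-sided inverses of `a, b`, then `a' x = x b'`. -/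
lemma inv_intertwine {α : Type*} [Monoid α] {a a' b b' x : α}
    (ha : a' * a = 1) (hb : b * b' = 1) (h : a * x = x * b) : a' * x = x * b' := by
  calc a' * x = a' * x * (b * b') := by rw [hb, mul_one]
    _ = a' * (a * x) * b' := by rw [← mul_assoc, mul_assoc a' x b, ← h, ← mul_assoc]
    _ = x * b' := by rw [← mul_assoc, ha, one_mul]

/-- From `g s = f t`, `fi f = 1`, `s si = 1` and `si c = c mi`, get `fi g c = t c mi`. -/
lemma cancel_helper {α : Type*} [Monoid α] {fi f g s si t c mi : α}
    (hco : g * s = f * t) (hsi : s * si = 1) (hfi : fi * f = 1)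
    (hic : si * c = c * mi) : fi * g * c = t * c * mi := by
  have hg : g = f * t * si := by
    calc g = g * (s * si) := by rw [hsi, mul_one]
      _ = g * s * si := by rw [mul_assoc]
      _ = f * t * si := by rw [hco]
  calc fi * g * c = fi * (f * t * si) * c := by rw [hg]
    _ = fi * f * t * (si * c) := by simp only [mul_assoc]
    _ = 1 * t * (c * mi) := by rw [hfi, hic]
    _ = t * c * mi := by rw [one_mul, mul_assoc]

/-- From the cocycle `f23 M = f12 N` and invertibility, `M⁻¹ f23⁻¹ = N⁻¹ f12⁻¹`. -/
lemma inv_glue {α : Type*} [Monoid α] {f12 fi12 f23 fi23 M Mi N Ni : α}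
    (hco : f23 * M = f12 * N) (hf12 : f12 * fi12 = 1) (hfi23 : fi23 * f23 = 1)
    (hMiM : Mi * M = 1) (hNNi : N * Ni = 1) : Mi * fi23 = Ni * fi12 := by
  have h1 : f12 * N * (Ni * fi12) = 1 := by
    calc f12 * N * (Ni * fi12) = f12 * (N * Ni) * fi12 := by simp only [mul_assoc]
      _ = 1 := by rw [hNNi, mul_one, hf12]
  calc Mi * fi23 = Mi * fi23 * (f12 * N * (Ni * fi12)) := by rw [h1, mul_one]
    _ = Mi * fi23 * (f23 * M * (Ni * fi12)) := by rw [hco]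
    _ = Mi * (fi23 * f23) * M * (Ni * fi12) := by simp only [mul_assoc]
    _ = Mi * M * (Ni * fi12) := by rw [hfi23, mul_one]
    _ = Ni * fi12 := by rw [hMiM, one_mul]

/-- Abstract assembly of one side of the twisted YBE into normal form. -/
lemma key_side {α : Type*} [Monoid α]
    (a b c Mi F12 Fi12 G13 Fi13 G23 Fi23 u1 u2 u3 u4 G12 : α)
    (L1 : Fi13 * G23 * c = u1 * c * Mi)
    (L2 : b * u1 = u2 * b)
    (L3 : G13 * u2 = F12 * u3)
    (L4 : Fi12 * F12 = 1)
    (L5 : a * u3 = u4 * a) :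
    G12 * a * Fi12 * (G13 * b * Fi13) * (G23 * c * Fi23)
      = G12 * (u4 * (a * (b * (c * (Mi * Fi23))))) := by
  have L1' : ∀ X, Fi13 * (G23 * (c * X)) = u1 * (c * (Mi * X)) := fun X => by
    simp only [← mul_assoc]; rw [L1]
  have L2' : ∀ X, b * (u1 * X) = u2 * (b * X) := fun X => by
    simp only [← mul_assoc]; rw [L2]
  have L3' : ∀ X, G13 * (u2 * X) = F12 * (u3 * X) := fun X => by
    simp only [← mul_assoc]; rw [L3]
  have L4' : ∀ X, Fi12 * (F12 * X) = X := fun X => by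
    rw [← mul_assoc, L4, one_mul]
  have L5' : ∀ X, a * (u3 * X) = u4 * (a * X) := fun X => by
    simp only [← mul_assoc]; rw [L5]
  calc G12 * a * Fi12 * (G13 * b * Fi13) * (G23 * c * Fi23)
      = G12 * (a * (Fi12 * (G13 * (b * (Fi13 * (G23 * (c * Fi23))))))) := by
        simp only [mul_assoc]
    _ = G12 * (a * (Fi12 * (G13 * (b * (u1 * (c * (Mi * Fi23))))))) := by rw [L1']
    _ = G12 * (a * (Fi12 * (G13 * (u2 * (b * (c * (Mi * Fi23))))))) := by rw [L2']
    _ = G12 * (a * (Fi12 * (F12 * (u3 * (b * (c * (Mi * Fi23))))))) := by rw [L3']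
    _ = G12 * (a * (u3 * (b * (c * (Mi * Fi23))))) := by rw [L4']
    _ = G12 * (u4 * (a * (b * (c * (Mi * Fi23))))) := by rw [L5']

end Aux

/-- Drinfel'd's admissible twist theorem, formalized for matrix algebras:
if `R` satisfies the YBE, `F` is invertible with inverse `Fi`, and there are invertible
`M = F_{1,23}`, `N = F_{12,3}` with `F₂₃ F_{1,23} = F₁₂ F_{12,3}`,
`F_{1,32} R₂₃ = R₂₃ F_{1,23}` and `F_{21,3} R₁₂ = R₁₂ F_{12,3}`, then
`R^F := F^{op} R F⁻¹` also satisfies the YBE. -/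
theorem stmt16 {V : Type*} [Fintype V] [DecidableEq V]
    (F Fi R : Matrix (V × V) (V × V) ℂ)
    (hF : F * Fi = 1) (hF' : Fi * F = 1) (hR : IsUnit R)
    (hYBE : emb12 R * emb13 R * emb23 R = emb23 R * emb13 R * emb12 R)
    (M N : M3 V) (hM : IsUnit M) (hN : IsUnit N)
    (cocycle : emb23 F * M = emb12 F * N)
    (h2a : swap23 M * emb23 R = emb23 R * M)
    (h2b : swap12 N * emb12 R = emb12 R * N)
    (RF : Matrix (V × V) (V × V) ℂ) (hRF : RF = flip2 F * R * Fi) :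
    emb12 RF * emb13 RF * emb23 RF = emb23 RF * emb13 RF * emb12 RF := by
  subst hRF
  obtain ⟨Mi, hMMi, hMiM⟩ := isUnit_iff_exists.mp hM
  obtain ⟨Ni, hNNi, hNiN⟩ := isUnit_iff_exists.mp hN
  -- inverses of the swapped twists
  have s23MMi : swap23 M * swap23 Mi = 1 := by rw [← swap23_mul, hMMi, swap23_one]
  have s23MiM : swap23 Mi * swap23 M = 1 := by rw [← swap23_mul, hMiM, swap23_one]
  have s12NNi : swap12 N * swap12 Ni = 1 := by rw [← swap12_mul, hNNi, swap12_one]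
  have s12NiN : swap12 Ni * swap12 N = 1 := by rw [← swap12_mul, hNiN, swap12_one]
  -- inverse intertwinings
  have iMc : swap23 Mi * emb23 R = emb23 R * Mi := inv_intertwine s23MiM hMMi h2a
  have iNa : swap12 Ni * emb12 R = emb12 R * Ni := inv_intertwine s12NiN hNNi h2b
  -- embedded inverses of F
  have f12 : emb12 F * emb12 Fi = 1 := by rw [← emb12_mul, hF, emb12_one]
  have fi12 : emb12 Fi * emb12 F = 1 := by rw [← emb12_mul, hF', emb12_one]
  have fi13 : emb13 Fi * emb13 F = 1 := by rw [← emb13_mul, hF', emb13_one]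
  have fi23 : emb23 Fi * emb23 F = 1 := by rw [← emb23_mul, hF', emb23_one]
  -- flipped admissibility conditions
  have d1 : swap23 (swap12 N) * emb13 R = emb13 R * swap23 N := by
    have h := congrArg swap23 h2b
    rwa [swap23_mul, swap23_mul, swap23_emb12] at h
  have d2 : swap12 (swap23 M) * emb13 R = emb13 R * swap12 M := by
    have h := congrArg swap12 h2a
    rwa [swap12_mul, swap12_mul, swap12_emb23] at h
  have d3 : swap23 (swap12 (swap23 M)) * emb12 R = emb12 R * swap23 (swap12 M) := by
    have h := congrArg swap23 d2
    rwa [swap23_mul, swap23_mul, swap23_emb13] at h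
  have d4 : swap12 (swap23 (swap12 N)) * emb23 R = emb23 R * swap12 (swap23 N) := by
    have h := congrArg swap12 d1
    rwa [swap12_mul, swap12_mul, swap12_emb13] at h
  -- flipped cocycle conditions
  have c23 : emb23 (flip2 F) * swap23 M = emb13 F * swap23 N := by
    have h := congrArg swap23 cocycle
    rwa [swap23_mul, swap23_mul, swap23_emb23, swap23_emb12] at h
  have c12 : emb13 F * swap12 M = emb12 (flip2 F) * swap12 N := by
    have h := congrArg swap12 cocycle
    rwa [swap12_mul, swap12_mul, swap12_emb23, swap12_emb12] at h
  have cs : emb12 F * swap23 (swap12 M) = emb13 (flip2 F) * swap23 (swap12 N) := by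
    have h := congrArg swap23 c12
    rwa [swap23_mul, swap23_mul, swap23_emb13, swap23_emb12] at h
  have ct : emb13 (flip2 F) * swap12 (swap23 M) = emb23 F * swap12 (swap23 N) := by
    have h := congrArg swap12 c23
    rwa [swap12_mul, swap12_mul, swap12_emb23, swap12_emb13] at h
  have cp : emb12 (flip2 F) * swap12 (swap23 (swap12 M))
      = emb23 (flip2 F) * swap12 (swap23 (swap12 N)) := by
    have h := congrArg swap12 cs
    rwa [swap12_mul, swap12_mul, swap12_emb12, swap12_emb13] at h
  have glue : emb12 (flip2 F) * swap23 (swap12 (swap23 M))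
      = emb23 (flip2 F) * swap12 (swap23 (swap12 N)) := by
    rw [← rev_eq]; exact cp
  -- the two cancellation steps
  have L1 : emb13 Fi * emb23 (flip2 F) * emb23 R = swap23 N * emb23 R * Mi :=
    cancel_helper c23 s23MMi fi13 iMc
  have R1 : emb13 Fi * emb12 (flip2 F) * emb12 R = swap12 M * emb12 R * Ni :=
    cancel_helper c12.symm s12NNi fi13 iNa
  -- the inverse of the cocycle
  have iglue : Mi * emb23 Fi = Ni * emb12 Fi :=
    inv_glue cocycle f12 fi23 hMiM hNNi
  -- expand the embedded products
  simp only [emb12_mul, emb13_mul, emb23_mul]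
  -- normalize both sides
  have lhs := key_side (emb12 R) (emb13 R) (emb23 R) Mi (emb12 F) (emb12 Fi)
    (emb13 (flip2 F)) (emb13 Fi) (emb23 (flip2 F)) (emb23 Fi)
    (swap23 N) (swap23 (swap12 N)) (swap23 (swap12 M)) (swap23 (swap12 (swap23 M)))
    (emb12 (flip2 F)) L1 d1.symm cs.symm fi12 d3.symm
  have rhs := key_side (emb23 R) (emb13 R) (emb12 R) Ni (emb23 F) (emb23 Fi)
    (emb13 (flip2 F)) (emb13 Fi) (emb12 (flip2 F)) (emb12 Fi)
    (swap12 M) (swap12 (swap23 M)) (swap12 (swap23 N)) (swap12 (swap23 (swap12 N)))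
    (emb23 (flip2 F)) R1 d2.symm ct fi23 d4.symm
  rw [lhs, rhs, iglue]
  have ybe' : ∀ X : M3 V, emb12 R * (emb13 R * (emb23 R * X))
      = emb23 R * (emb13 R * (emb12 R * X)) := fun X => by
    simp only [← mul_assoc]; rw [hYBE]
  rw [ybe']
  simp only [← mul_assoc]
  rw [glue]
end

section
/- Let (X,+,∘) be a left brace with (X,+) abelian, σ_a(b) := -a + a∘b. Suppose n×n matrices w_a, h_a (a ∈ X, n = |X|) satisfy w_a h_b = h_{σ_a(b)} w_a, h_a h_b = δ_{a,b} h_a, Σ_a h_a = I, and w_a w_b = w_{a∘b}. Define F := Σ_a h_a ⊗ w_a^{-1}, R^F := F^{op} F^{-1}, F_{12,3} := Σ_{a,b} h_a ⊗ h_{σ_a(b)} ⊗ (w_b w_a)^{-1}. Then F_{12,3} = F_{21,3}, i.e. Σ_{a,b} h_a ⊗ h_{σ_a(b)} ⊗ w_{a∘b}^{-1} = Σ_{a,b} h_{σ_a(b)} ⊗ h_a ⊗ w_{a∘b}^{-1} after reindexing by â = σ_a(b), b̂ = τ_b(a). -/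
open Matrix Kronecker

/-- for a left brace and matrices `w_a, h_a` satisfying the special
set-theoretic YB algebra relations with `w_a w_b = w_{a∘b}`, one has `F_{12,3} = F_{21,3}`:
`Σ_{a,b} h_a ⊗ h_{σ_a(b)} ⊗ w_{a∘b}⁻¹ = Σ_{a,b} h_{σ_a(b)} ⊗ h_a ⊗ w_{a∘b}⁻¹`. -/
theorem stmt17 {X : Type*} [LeftBrace X] [Fintype X] [DecidableEq X]
    (w h : X → Matrix X X ℂ)
    (hwh : ∀ a b : X, w a * h b = h (sig a b) * w a)
    (hhh : ∀ a b : X, h a * h b = if a = b then h a else 0)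
    (hsum : ∑ a : X, h a = 1)
    (hww : ∀ a b : X, w a * w b = w (a * b)) :
    ∑ a : X, ∑ b : X, (h a ⊗ₖ h (sig a b)) ⊗ₖ (w (a * b))⁻¹
      = ∑ a : X, ∑ b : X, (h (sig a b) ⊗ₖ h a) ⊗ₖ (w (a * b))⁻¹ := by
  have sig_sigInv : ∀ a x : X, sig a (sigInv a x) = x := by
    intro a x; simp [sig, sigInv, mul_inv_cancel_left, neg_add_cancel_left]
  have sigInv_sig : ∀ a x : X, sigInv a (sig a x) = x := by
    intro a x; simp [sig, sigInv, add_neg_cancel_left, inv_mul_cancel_left]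
  have sig_tau : ∀ a b : X, sig (sig a b) (tau b a) = a := fun a b => sig_sigInv _ _
  have tau_sig : ∀ a b : X, tau (tau b a) (sig a b) = b := by
    intro a b
    rw [tau, sig_tau, sigInv_sig]
  have mul_eq : ∀ a b : X, sig a b * tau b a = a * b := by
    intro a b
    rw [tau, sigInv, mul_inv_cancel_left, sig]
    abel
  set f : X × X → X × X := fun p => (sig p.1 p.2, tau p.2 p.1) with hf
  have finv : Function.Involutive f := by
    intro p
    simp only [hf, sig_tau, tau_sig]
  have key : (∑ p : X × X, (h p.1 ⊗ₖ h (sig p.1 p.2)) ⊗ₖ (w (p.1 * p.2))⁻¹)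
      = ∑ p : X × X, (h (sig p.1 p.2) ⊗ₖ h p.1) ⊗ₖ (w (p.1 * p.2))⁻¹ := by
    refine Fintype.sum_bijective f finv.bijective _ _ ?_
    intro p
    simp only [hf, sig_tau, mul_eq]
  simpa [Fintype.sum_prod_type] using key
end

section
/- Let (X, +, 0) be a group and for each a ∈ X let σ_a : X → X be an additive bijection with σ_a(b+c) = σ_a(b)+σ_a(c). Suppose left cancellation: if σ_a(b) = σ_a(c) then b = c (automatic from bijectivity), and define a∘b := a+σ_a(b). If ∘ is associative, then the map a ↦ σ_a is a group homomorphism from (X,∘) to the group of additive automorphisms of (X,+), i.e. σ_{a∘b} = σ_a ∘ σ_b (composition) and σ_0 = id. -/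
/-- if `∘` is associative then `a ↦ σ_a` is a group homomorphism from
`(X,∘)` to the additive automorphisms of `(X,+)`: `σ_{a∘b} = σ_a ∘ σ_b` and `σ_0 = id`. -/
theorem stmt19 {X : Type*} [AddGroup X] (σ : X → X → X)
    (hbij : ∀ a, Function.Bijective (σ a))
    (hadd : ∀ x a b : X, σ x (a + b) = σ x a + σ x b)
    (hcancel : ∀ a b c : X, σ a b = σ a c → b = c)
    (hassoc : ∀ a b c : X, circ σ (circ σ a b) c = circ σ a (circ σ b c)) :
    (∀ a b : X, σ (circ σ a b) = σ a ∘ σ b) ∧ σ (0 : X) = id := by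
  have hmain : ∀ a b : X, σ (circ σ a b) = σ a ∘ σ b := by
    intro a b
    funext c
    have h := hassoc a b c
    simp only [circ, hadd, ← add_assoc] at h
    simpa [circ] using add_left_cancel h
  refine ⟨hmain, ?_⟩
  have h0 : ∀ a : X, σ a 0 = 0 := by
    intro a
    have h := hadd a 0 0
    rw [add_zero] at h
    exact (left_eq_add.mp h).symm ▸ rfl
  have hc : circ σ (0 : X) 0 = 0 := by simp [circ, h0]
  have h2 := hmain 0 0
  rw [hc] at h2
  funext c
  have : σ (0 : X) c = σ 0 (σ 0 c) := by
    conv_lhs => rw [h2]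
    rfl
  simpa using (hcancel 0 _ _ this).symm
end
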